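/- arXiv:1101.4353 — 3 statements merged into one kernel-verified Lean document; each statement's English description precedes it below -/
import Mathlib

section
/- Let Ω be a convex set of signed measures of total mass 1 and suppose Q* ∈ Ω is the chi-square projection of the probability measure P on Ω (i.e., Q* minimizes χ²(·,P) over Ω). Then for all Q ∈ Ω with χ²(Q,P) < ∞, the density q* = dQ*/dP satisfies ∫ q* dQ* ≤ ∫ q* dQ. -/
open MeasureTheory

/-- If `Ω` (represented by a convex set `D` of densities `q = dQ/dP`, `∫ q dP = 1`)
is convex and `q*` is the chi-square projection of `P` on `Ω`, then
for all `Q ∈ Ω` with `χ²(Q,P) < ∞`, `∫ q* dQ* ≤ ∫ q* dQ`. -/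
theorem stmt_2 {α : Type*} [MeasurableSpace α] (P : Measure α) [IsProbabilityMeasure P]
    (D : Set (α → ℝ))
    (hD : ∀ q ∈ D, Integrable q P ∧ ∫ x, q x ∂P = 1)
    (hconv : ∀ q₁ ∈ D, ∀ q₂ ∈ D, ∀ t : ℝ, 0 ≤ t → t ≤ 1 →
      (fun x => t * q₁ x + (1 - t) * q₂ x) ∈ D)
    (qs : α → ℝ) (hqs : qs ∈ D) (hqsL2 : MemLp qs 2 P)
    (hmin : ∀ q ∈ D, MemLp q 2 P →
      ∫ x, (qs x - 1) ^ 2 ∂P ≤ ∫ x, (q x - 1) ^ 2 ∂P) :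
    ∀ q ∈ D, MemLp q 2 P →
      ∫ x, qs x * qs x ∂P ≤ ∫ x, qs x * q x ∂P := by
  intro q hq hqL2
  obtain ⟨hqsInt, hqsMean⟩ := hD qs hqs
  obtain ⟨hqInt, hqMean⟩ := hD q hq
  set f : α → ℝ := fun x => qs x - 1 with hf_def
  set g : α → ℝ := fun x => q x - qs x with hg_def
  have mulInt : ∀ (u v : α → ℝ), MemLp u 2 P → MemLp v 2 P →
      Integrable (fun x => u x * v x) P := by
    intro u v hu hv
    have h := hv.smul hu (p := 2) (q := 2) (r := 1)
    exact memLp_one_iff_integrable.mp h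
  have hf2 : MemLp f 2 P := hqsL2.sub (memLp_const 1)
  have hg2 : MemLp g 2 P := hqL2.sub hqsL2
  have hfg : Integrable (fun x => f x * g x) P := mulInt f g hf2 hg2
  have hgg : Integrable (fun x => g x * g x) P := mulInt g g hg2 hg2
  have hff : Integrable (fun x => f x * f x) P := mulInt f f hf2 hf2
  have hqsq : Integrable (fun x => qs x * q x) P := mulInt qs q hqsL2 hqL2
  have hqsqs : Integrable (fun x => qs x * qs x) P := mulInt qs qs hqsL2 hqsL2
  set A := ∫ x, f x * g x ∂P with hA_def
  set B := ∫ x, g x * g x ∂P with hB_def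
  have hB : 0 ≤ B := integral_nonneg (fun x => mul_self_nonneg _)
  have key : ∀ t : ℝ, 0 < t → t ≤ 1 → 0 ≤ 2 * A + t * B := by
    intro t ht ht1
    have hmem := hconv q hq qs hqs t ht.le ht1
    have hqtL2 : MemLp (fun x => t * q x + (1 - t) * qs x) 2 P :=
      (hqL2.const_mul t).add (hqsL2.const_mul (1 - t))
    have h := hmin _ hmem hqtL2
    have hLeft : ∫ x, (qs x - 1) ^ 2 ∂P = ∫ x, f x * f x ∂P := by
      apply integral_congr_ae
      filter_upwards with x
      simp [hf_def, sq]
    have hRight : ∫ x, ((fun x => t * q x + (1 - t) * qs x) x - 1) ^ 2 ∂P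
        = ∫ x, f x * f x ∂P + t * (2 * A + t * B) := by
      have hptwise : ∀ x, ((fun x => t * q x + (1 - t) * qs x) x - 1) ^ 2
          = f x * f x + t * (2 * (f x * g x) + t * (g x * g x)) := by
        intro x
        simp only [hf_def, hg_def]
        ring
      have h1 : Integrable (fun x => 2 * (f x * g x) + t * (g x * g x)) P :=
        (hfg.const_mul 2).add (hgg.const_mul t)
      have h2 : Integrable (fun x => t * (2 * (f x * g x) + t * (g x * g x))) P :=
        h1.const_mul t
      rw [integral_congr_ae (Filter.Eventually.of_forall hptwise),
        integral_add hff h2, integral_const_mul,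
        integral_add (hfg.const_mul 2) (hgg.const_mul t),
        integral_const_mul, integral_const_mul]
    rw [hLeft, hRight] at h
    nlinarith
  have hA : 0 ≤ A := by
    by_contra hA
    push_neg at hA
    rcases eq_or_lt_of_le hB with hB0 | hBpos
    · have := key 1 one_pos le_rfl
      nlinarith
    · set t := min 1 (-A / B) with ht_def
      have htpos : 0 < t := lt_min one_pos (div_pos (neg_pos.mpr hA) hBpos)
      have ht1 : t ≤ 1 := min_le_left _ _
      have h := key t htpos ht1
      have htB : t * B ≤ -A := by
        calc t * B ≤ (-A / B) * B := by
              apply mul_le_mul_of_nonneg_right (min_le_right _ _) hB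
        _ = -A := by field_simp
      linarith
  have hsub : ∫ x, (q x - qs x) ∂P = 0 := by
    rw [integral_sub hqInt hqsInt, hqMean, hqsMean]; ring
  have hA_eq : A = ∫ x, qs x * q x ∂P - ∫ x, qs x * qs x ∂P := by
    have hptwise : ∀ x, f x * g x = qs x * q x - qs x * qs x - (q x - qs x) := by
      intro x; simp only [hf_def, hg_def]; ring
    have h3 : Integrable (fun x => qs x * q x - qs x * qs x) P := hqsq.sub hqsqs
    have h4 : Integrable (fun x => q x - qs x) P := hqInt.sub hqsInt
    rw [hA_def, integral_congr_ae (Filter.Eventually.of_forall hptwise),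
      integral_sub h3 h4, integral_sub hqsq hqsqs, hsub]
    ring
  linarith [hA_eq ▸ hA]
end

section
/- Let Ω be a set of signed measures of total mass 1 and suppose Q* ∈ Ω has density q* = dQ*/dP such that for all Q ∈ Ω with χ²(Q,P) < ∞ one has q* ∈ L¹(Q) and ∫ q* dQ* ≤ ∫ q* dQ. Then Q* is the chi-square projection of P on Ω, i.e., χ²(Q*,P) ≤ χ²(Q,P) for all Q ∈ Ω. -/
open MeasureTheory

lemma aux_sq_expand {α : Type*} [MeasurableSpace α] (P : Measure α) [IsProbabilityMeasure P]
    (f : α → ℝ) (hf : Integrable f P) (hff : Integrable (fun x => f x * f x) P) :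
    ∫ x, (f x - 1) ^ 2 ∂P = ∫ x, f x * f x ∂P - 2 * ∫ x, f x ∂P + 1 := by
  have h : (fun x => (f x - 1) ^ 2) = fun x => f x * f x - (2 : ℝ) * f x + 1 := by
    funext x; ring
  have h1 : Integrable (fun x => f x * f x - 2 * f x) P := hff.sub (hf.const_mul 2)
  have h2 : Integrable (fun x => (2:ℝ) * f x) P := hf.const_mul 2
  rw [h, integral_add h1 (integrable_const 1), integral_sub hff h2,
    MeasureTheory.integral_const_mul, integral_const]
  simp

/-- Converse: if `q* ∈ Ω` (densities `D`) satisfies `q* ∈ L¹(Q)` and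
`∫ q* dQ* ≤ ∫ q* dQ` for all `Q ∈ Ω` with `χ²(Q,P) < ∞`, then `Q*` is the
chi-square projection of `P` on `Ω`: `χ²(Q*,P) ≤ χ²(Q,P)` for all `Q ∈ Ω`. -/
theorem stmt_3 {α : Type*} [MeasurableSpace α] (P : Measure α) [IsProbabilityMeasure P]
    (D : Set (α → ℝ))
    (hD : ∀ q ∈ D, Integrable q P ∧ ∫ x, q x ∂P = 1)
    (qs : α → ℝ) (hqs : qs ∈ D) (hqsL2 : MemLp qs 2 P)
    (hproj : ∀ q ∈ D, MemLp q 2 P →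
      Integrable (fun x => qs x * q x) P ∧
      ∫ x, qs x * qs x ∂P ≤ ∫ x, qs x * q x ∂P) :
    ∀ q ∈ D, MemLp q 2 P →
      ∫ x, (qs x - 1) ^ 2 ∂P ≤ ∫ x, (q x - 1) ^ 2 ∂P := by
  intro q hq hqL2
  obtain ⟨hqInt, hqI⟩ := hD q hq
  obtain ⟨hqsInt, hqsI⟩ := hD qs hqs
  have hqq : Integrable (fun x => q x * q x) P := by simpa [sq] using hqL2.integrable_sq
  have hss : Integrable (fun x => qs x * qs x) P := by simpa [sq] using hqsL2.integrable_sq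
  obtain ⟨hm, hle⟩ := hproj q hq hqL2
  have e1 := aux_sq_expand P q hqInt hqq
  have e2 := aux_sq_expand P qs hqsInt hss
  have e3 : ∫ x, (q x - qs x) ^ 2 ∂P
      = ∫ x, q x * q x ∂P - 2 * ∫ x, qs x * q x ∂P + ∫ x, qs x * qs x ∂P := by
    have h : (fun x => (q x - qs x) ^ 2)
        = fun x => q x * q x - (2 : ℝ) * (qs x * q x) + qs x * qs x := by
      funext x; ring
    have h1 : Integrable (fun x => q x * q x - 2 * (qs x * q x)) P := hqq.sub (hm.const_mul 2)
    have h2 : Integrable (fun x => (2:ℝ) * (qs x * q x)) P := hm.const_mul 2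
    rw [h, integral_add h1 hss, integral_sub hqq h2, MeasureTheory.integral_const_mul]
  have hnn : 0 ≤ ∫ x, (q x - qs x) ^ 2 ∂P :=
    integral_nonneg fun x => sq_nonneg _
  rw [e1, e2, hqI, hqsI]
  linarith [hnn, hle, e3]
end

section
/- Let p₁,…,p_m > 0 with p_{m+1} := 1 − Σᵢ pᵢ > 0. Let D = diag(p₁,…,p_m) and U(i,l) = √(pᵢ p_l), and set S = D^{1/2}(I − U)D^{1/2}, i.e., S(i,l) = pᵢ δ_{il} − pᵢ p_l. Then every eigenvalue λ of S satisfies p_{m+1} · min_{1≤i≤m} pᵢ ≤ λ ≤ max_{1≤i≤m} pᵢ. -/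
/-- Eigenvalue bounds for the multinomial covariance matrix
`S(i,l) = pᵢ δ_{il} − pᵢ p_l`: every eigenvalue `λ` satisfies
`p_{m+1} · minᵢ pᵢ ≤ λ ≤ maxᵢ pᵢ`. -/
theorem stmt_9 {m : ℕ} [NeZero m] (p : Fin m → ℝ) (hp : ∀ i, 0 < p i)
    (hsum : ∑ i, p i < 1) (pm1 : ℝ) (hpm1 : pm1 = 1 - ∑ i, p i)
    (S : Matrix (Fin m) (Fin m) ℝ)
    (hS : S = Matrix.of fun i l => (if i = l then p i else 0) - p i * p l) :
    ∀ lam : ℝ,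
      Module.End.HasEigenvalue (Matrix.toLin' S : Module.End ℝ (Fin m → ℝ)) lam →
      pm1 * (⨅ i, p i) ≤ lam ∧ lam ≤ ⨆ i, p i := by
  intro lam hlam
  obtain ⟨v, hv⟩ := hlam.exists_hasEigenvector
  have hveq : S.mulVec v = lam • v := by
    have := hv.apply_eq_smul
    simpa [Matrix.toLin'_apply] using this
  have hvne : v ≠ 0 := hv.right
  -- key quantities
  set N : ℝ := ∑ i, (v i) ^ 2 with hN
  set A : ℝ := ∑ i, p i * (v i) ^ 2 with hA
  set B : ℝ := (∑ i, p i * v i) ^ 2 with hB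
  have hNpos : 0 < N := by
    obtain ⟨i, hi⟩ := Function.ne_iff.1 hvne
    exact Finset.sum_pos' (fun j _ => sq_nonneg _)
      ⟨i, Finset.mem_univ i, by have hi' : v i ≠ 0 := hi; positivity⟩
  -- main identity: lam * N = A - B
  have hkey : lam * N = A - B := by
    have h1 : ∀ i, (S.mulVec v) i = p i * v i - p i * (∑ l, p l * v l) := by
      intro i
      simp only [hS, Matrix.mulVec, dotProduct, Matrix.of_apply]
      rw [show (∑ l, ((if i = l then p i else 0) - p i * p l) * v l)
          = ∑ l, ((if i = l then p i * v l else 0) - p i * (p l * v l)) by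
        apply Finset.sum_congr rfl; intro l _; by_cases h : i = l <;> simp [h] <;> ring]
      rw [Finset.sum_sub_distrib, ← Finset.mul_sum]
      simp
    have h2 : ∑ i, v i * (S.mulVec v) i = A - B := by
      set T := ∑ l, p l * v l with hT
      simp only [h1]
      have e : ∑ i, v i * (p i * v i - p i * T)
          = (∑ i, p i * v i ^ 2) - (∑ i, p i * v i) * T := by
        rw [Finset.sum_mul, ← Finset.sum_sub_distrib]
        exact Finset.sum_congr rfl fun i _ => by ring
      rw [e, hA, hB, hT]; ring
    have h3 : ∑ i, v i * (S.mulVec v) i = lam * N := by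
      rw [hveq, hN, Finset.mul_sum]
      apply Finset.sum_congr rfl; intro i _
      simp [Pi.smul_apply, smul_eq_mul]; ring
    linarith
  have hinf_le : ∀ i, (⨅ j, p j) ≤ p i := fun i =>
    ciInf_le (Finite.bddBelow_range p) i
  have hle_sup : ∀ i, p i ≤ ⨆ j, p j := fun i =>
    le_ciSup (Finite.bddAbove_range p) i
  have hpm1pos : 0 < pm1 := by rw [hpm1]; linarith
  constructor
  · -- lower bound
    -- Cauchy-Schwarz: B ≤ (∑ p) * A
    have hcs : B ≤ (∑ i, p i) * A := by
      have := Finset.sum_mul_sq_le_sq_mul_sq Finset.univ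
        (fun i => Real.sqrt (p i)) (fun i => Real.sqrt (p i) * v i)
      have e1 : (∑ i, Real.sqrt (p i) * (Real.sqrt (p i) * v i)) = ∑ i, p i * v i := by
        apply Finset.sum_congr rfl; intro i _
        rw [← mul_assoc, Real.mul_self_sqrt (hp i).le]
      have e2 : (∑ i, Real.sqrt (p i) ^ 2) = ∑ i, p i := by
        apply Finset.sum_congr rfl; intro i _
        exact Real.sq_sqrt (hp i).le
      have e3 : (∑ i, (Real.sqrt (p i) * v i) ^ 2) = A := by
        apply Finset.sum_congr rfl; intro i _
        rw [mul_pow, Real.sq_sqrt (hp i).le]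
      rw [hB, ← e1, ← e2, ← e3]
      exact this
    have hAge : (⨅ i, p i) * N ≤ A := by
      rw [hN, hA, Finset.mul_sum]
      apply Finset.sum_le_sum; intro i _
      exact mul_le_mul_of_nonneg_right (hinf_le i) (sq_nonneg _)
    have : pm1 * ((⨅ i, p i) * N) ≤ lam * N := by
      rw [hkey]
      have h4 : pm1 * A ≤ A - B := by
        have : A - (∑ i, p i) * A ≤ A - B := by linarith
        calc pm1 * A = A - (∑ i, p i) * A := by rw [hpm1]; ring
          _ ≤ A - B := this
      calc pm1 * ((⨅ i, p i) * N) ≤ pm1 * A :=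
            mul_le_mul_of_nonneg_left hAge hpm1pos.le
        _ ≤ A - B := h4
    have := (mul_le_mul_iff_of_pos_right hNpos).1 (by linarith [this] : pm1 * (⨅ i, p i) * N ≤ lam * N)
    exact this
  · -- upper bound
    have hBnn : 0 ≤ B := sq_nonneg _
    have hAle : A ≤ (⨆ i, p i) * N := by
      rw [hN, hA, Finset.mul_sum]
      apply Finset.sum_le_sum; intro i _
      exact mul_le_mul_of_nonneg_right (hle_sup i) (sq_nonneg _)
    have : lam * N ≤ (⨆ i, p i) * N := by rw [hkey]; linarith
    exact (mul_le_mul_iff_of_pos_right hNpos).1 this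
end
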